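/- arXiv:1503.07224 — 2 statements merged into one kernel-verified Lean document; each statement's English description precedes it below -/
import Mathlib

section
/- Let G be a finite connected graph, M ⊆ E(G) a set of measured edges such that E(G) \ M is a spanning tree, and for each spanning tree T of G and each injection vector x define the flow s(T,x) on the measured edges induced by routing x through T. Then for generic (e.g., strictly positive and linearly independent over appropriate subsets) x, distinct spanning trees T ≠ T' yield distinct measured flow vectors s(T,x) ≠ s(T',x). -/
section Aux

lemma cut_formula {V : Type*} [Fintype V] [DecidableEq V] {E : Type*} [Fintype E]
    (a b : E → V) (hab : ∀ e, a e ≠ b e) (f : E → ℝ) (ι : V → ℝ) :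
    ∑ v, ι v * ((Matrix.of fun (v : V) (e : E) =>
        if v = a e then (1 : ℝ) else if v = b e then -1 else 0).mulVec f) v
    = ∑ e, f e * (ι (a e) - ι (b e)) := by
  simp only [Matrix.mulVec, dotProduct, Matrix.of_apply, Finset.mul_sum]
  rw [Finset.sum_comm]
  refine Finset.sum_congr rfl fun e _ => ?_
  have h : ∀ v : V, ι v * ((if v = a e then (1:ℝ) else if v = b e then -1 else 0) * f e)
      = (if v = a e then ι (a e) * f e else 0) + (if v = b e then -(ι (b e) * f e) else 0) := by
    intro v
    have hba : ¬ b e = a e := fun h => hab e h.symm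
    by_cases h1 : v = a e <;> by_cases h2 : v = b e
    · exact absurd (h1.symm.trans h2) (hab e)
    · subst h1; simp [hab e, hba]
    · subst h2; simp [hba]
    · simp [h1, h2]
  simp only [h, Finset.sum_add_distrib, Finset.sum_ite_eq', Finset.mem_univ, if_true]
  ring

lemma ori_adj {V : Type*} [Fintype V] [DecidableEq V]
    (G : SimpleGraph V) [DecidableRel G.Adj]
    {ori : {e : Sym2 V // e ∈ G.edgeFinset} → V × V}
    (hori : ∀ e, Sym2.mk (ori e).1 (ori e).2 = e.1) (e : {e : Sym2 V // e ∈ G.edgeFinset}) :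
    G.Adj (ori e).1 (ori e).2 := by
  have := e.2
  rw [SimpleGraph.mem_edgeFinset, ← hori e] at this
  exact this

lemma main_cut {V : Type*} [Fintype V] [DecidableEq V]
    (G : SimpleGraph V) [DecidableRel G.Adj]
    (ori : {e : Sym2 V // e ∈ G.edgeFinset} → V × V)
    (hori : ∀ e, Sym2.mk (ori e).1 (ori e).2 = e.1)
    (f : {e : Sym2 V // e ∈ G.edgeFinset} → ℝ)
    (S : SimpleGraph V)
    (hsupp : ∀ e, f e ≠ 0 → e.1 ∈ S.edgeSet)
    (e0 : {e : Sym2 V // e ∈ G.edgeFinset})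
    (ι : V → ℝ)
    (hι : ∀ u w, (S.deleteEdges {e0.1}).Adj u w → ι u = ι w) :
    ∑ v, ι v * ((Matrix.of fun (v : V) (e : {e : Sym2 V // e ∈ G.edgeFinset}) =>
        if v = (ori e).1 then (1 : ℝ) else if v = (ori e).2 then -1 else 0).mulVec f) v
    = f e0 * (ι (ori e0).1 - ι (ori e0).2) := by
  have hne : ∀ e : {e : Sym2 V // e ∈ G.edgeFinset}, (ori e).1 ≠ (ori e).2 :=
    fun e => (ori_adj G hori e).ne
  rw [cut_formula _ _ hne]
  refine Finset.sum_eq_single e0 ?_ (by simp)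
  intro e _ hne0
  by_cases hfe : f e = 0
  · simp [hfe]
  have heS : e.1 ∈ S.edgeSet := hsupp e hfe
  have hadj : (S.deleteEdges {e0.1}).Adj (ori e).1 (ori e).2 := by
    rw [SimpleGraph.deleteEdges_adj]
    refine ⟨?_, ?_⟩
    · rw [← SimpleGraph.mem_edgeSet]
      have h : s((ori e).1, (ori e).2) = e.1 := hori e
      rw [h]; exact heS
    · have h : s((ori e).1, (ori e).2) = e.1 := hori e
      rw [h]
      simp only [Set.mem_singleton_iff]
      exact fun h' => hne0 (Subtype.ext h')
  rw [hι _ _ hadj]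
  ring

lemma bridge_not_reachable {V : Type*} [Fintype V] [DecidableEq V]
    (G : SimpleGraph V) [DecidableRel G.Adj]
    {ori : {e : Sym2 V // e ∈ G.edgeFinset} → V × V}
    (hori : ∀ e, Sym2.mk (ori e).1 (ori e).2 = e.1)
    (T : SimpleGraph V) (hTac : T.IsAcyclic)
    (e0 : {e : Sym2 V // e ∈ G.edgeFinset}) (he0 : e0.1 ∈ T.edgeSet) :
    ¬ (T.deleteEdges {e0.1}).Reachable (ori e0).1 (ori e0).2 := by
  have hb := (SimpleGraph.isAcyclic_iff_forall_edge_isBridge.mp hTac) he0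
  have he : e0.1 = s((ori e0).1, (ori e0).2) := (hori e0).symm
  rw [he, SimpleGraph.isBridge_iff] at hb
  rw [he]
  exact hb

lemma tree_flow_ne_zero {V : Type*} [Fintype V] [DecidableEq V]
    (G : SimpleGraph V) [DecidableRel G.Adj]
    (r : V) (x : V → ℝ) (hx : ∀ v, v ≠ r → 0 < x v)
    (ori : {e : Sym2 V // e ∈ G.edgeFinset} → V × V)
    (hori : ∀ e, Sym2.mk (ori e).1 (ori e).2 = e.1)
    (T : SimpleGraph V) (hTac : T.IsAcyclic)
    (f : {e : Sym2 V // e ∈ G.edgeFinset} → ℝ)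
    (hfsupp : ∀ e, f e ≠ 0 → e.1 ∈ T.edgeSet)
    (hf : (Matrix.of fun (v : V) (e : {e : Sym2 V // e ∈ G.edgeFinset}) =>
        if v = (ori e).1 then (1 : ℝ) else if v = (ori e).2 then -1 else 0).mulVec f
      = fun v => if v = r then ∑ u ∈ Finset.univ.erase r, x u else -x v)
    (e0 : {e : Sym2 V // e ∈ G.edgeFinset}) (he0 : e0.1 ∈ T.edgeSet) :
    f e0 ≠ 0 := by
  classical
  have hbridge := bridge_not_reachable G hori T hTac e0 he0
  set S' := T.deleteEdges {e0.1} with hS'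
  set c := if S'.Reachable (ori e0).1 r then (ori e0).2 else (ori e0).1 with hc
  have hcr : ¬ S'.Reachable c r := by
    rw [hc]
    split
    · rename_i h
      exact fun hbr => hbridge (h.trans hbr.symm)
    · assumption
  set ι : V → ℝ := fun v => if S'.Reachable c v then 1 else 0 with hι
  have hιinv : ∀ u w, S'.Adj u w → ι u = ι w := by
    intro u w huw
    simp only [hι]
    by_cases h : S'.Reachable c u
    · rw [if_pos h, if_pos (h.trans huw.reachable)]
    · rw [if_neg h, if_neg (fun h' => h (h'.trans huw.symm.reachable))]
  have hcut := main_cut G ori hori f T hfsupp e0 ι hιinv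
  rw [hf] at hcut
  have hLHS : ∑ v, ι v * (if v = r then ∑ u ∈ Finset.univ.erase r, x u else -x v)
      = ∑ v ∈ Finset.univ.filter (fun v => S'.Reachable c v), -x v := by
    rw [Finset.sum_filter]
    refine Finset.sum_congr rfl fun v _ => ?_
    by_cases h : S'.Reachable c v
    · have hvr : v ≠ r := fun h' => hcr (h' ▸ h)
      simp only [hι, if_pos h, if_neg hvr, one_mul]
    · simp [hι, h]
  have hneg : ∑ v ∈ Finset.univ.filter (fun v => S'.Reachable c v), -x v < 0 := by
    apply Finset.sum_neg
    · intro v hv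
      simp only [Finset.mem_filter] at hv
      have hvr : v ≠ r := fun h' => hcr (h' ▸ hv.2)
      linarith [hx v hvr]
    · exact ⟨c, by simp [SimpleGraph.Reachable.refl]⟩
  intro hf0
  rw [hLHS, hf0, zero_mul] at hcut
  exact absurd hcut (ne_of_lt hneg)

end Aux

/-- Identifiability (sufficiency): let `G` be a finite connected graph with root `r`,
strictly positive consumptions `x v` at the non-root vertices, an arbitrary orientation of
the edges with signed incidence matrix `B`, and a valid sensor placement `M` (i.e.
`E(G) \ M` is a spanning tree). For a spanning tree `T`, the flow routed through `T` is the
vector `f` supported on the edges of `T` satisfying the conservation law `B f = y`, where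
`y r = ∑_{v ≠ r} x v` and `y v = -x v` otherwise. If the flows of two spanning trees agree
(in sign and magnitude) on all measured edges, then the trees are equal. -/
theorem stmt_18 {V : Type*} [Fintype V] [DecidableEq V]
    (G : SimpleGraph V) [DecidableRel G.Adj] (hG : G.Connected)
    (r : V) (x : V → ℝ) (hx : ∀ v, v ≠ r → 0 < x v)
    (ori : {e : Sym2 V // e ∈ G.edgeFinset} → V × V)
    (hori : ∀ e, Sym2.mk (ori e).1 (ori e).2 = e.1)
    (M : Finset (Sym2 V)) (hMG : M ⊆ G.edgeFinset)
    (hM : (G.deleteEdges (M : Set (Sym2 V))).IsTree)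
    (T T' : SimpleGraph V) (hTG : T ≤ G) (hT : T.IsTree) (hT'G : T' ≤ G) (hT' : T'.IsTree)
    (f f' : {e : Sym2 V // e ∈ G.edgeFinset} → ℝ)
    (hfsupp : ∀ e, f e ≠ 0 → e.1 ∈ T.edgeSet)
    (hf'supp : ∀ e, f' e ≠ 0 → e.1 ∈ T'.edgeSet)
    (hf : (Matrix.of fun (v : V) (e : {e : Sym2 V // e ∈ G.edgeFinset}) =>
        if v = (ori e).1 then (1 : ℝ) else if v = (ori e).2 then -1 else 0).mulVec f
      = fun v => if v = r then ∑ u ∈ Finset.univ.erase r, x u else -x v)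
    (hf' : (Matrix.of fun (v : V) (e : {e : Sym2 V // e ∈ G.edgeFinset}) =>
        if v = (ori e).1 then (1 : ℝ) else if v = (ori e).2 then -1 else 0).mulVec f'
      = fun v => if v = r then ∑ u ∈ Finset.univ.erase r, x u else -x v)
    (hagree : ∀ e : {e : Sym2 V // e ∈ G.edgeFinset}, e.1 ∈ M → f e = f' e) :
    T = T' := by
  classical
  -- Step I: the two flows agree everywhere.
  have hfe : f = f' := by
    by_contra hne'
    have hex : ∃ e0, f e0 - f' e0 ≠ 0 := by
      by_contra h
      push_neg at h
      exact hne' (funext fun e => sub_eq_zero.mp (h e))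
    obtain ⟨e0, he0⟩ := hex
    set g : {e : Sym2 V // e ∈ G.edgeFinset} → ℝ := fun e => f e - f' e with hg
    have hBg : (Matrix.of fun (v : V) (e : {e : Sym2 V // e ∈ G.edgeFinset}) =>
        if v = (ori e).1 then (1 : ℝ) else if v = (ori e).2 then -1 else 0).mulVec g = 0 := by
      have hgd : g = f - f' := rfl
      rw [hgd, Matrix.mulVec_sub, hf, hf', sub_self]
    set S := G.deleteEdges (M : Set (Sym2 V)) with hS
    have hgsupp : ∀ e, g e ≠ 0 → e.1 ∈ S.edgeSet := by
      intro e he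
      rw [hS, SimpleGraph.edgeSet_deleteEdges]
      refine ⟨SimpleGraph.mem_edgeFinset.mp e.2, ?_⟩
      intro hmem
      exact he (sub_eq_zero.mpr (hagree e hmem))
    have heS : e0.1 ∈ S.edgeSet := hgsupp e0 he0
    have hbridge := bridge_not_reachable G hori S hM.IsAcyclic e0 heS
    set ι : V → ℝ := fun v =>
      if (S.deleteEdges {e0.1}).Reachable (ori e0).1 v then 1 else 0 with hι
    have hιinv : ∀ u w, (S.deleteEdges {e0.1}).Adj u w → ι u = ι w := by
      intro u w huw
      simp only [hι]
      by_cases h : (S.deleteEdges {e0.1}).Reachable (ori e0).1 u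
      · rw [if_pos h, if_pos (h.trans huw.reachable)]
      · rw [if_neg h, if_neg (fun h' => h (h'.trans huw.symm.reachable))]
    have hcut := main_cut G ori hori g S hgsupp e0 ι hιinv
    rw [hBg] at hcut
    simp only [Pi.zero_apply, mul_zero, Finset.sum_const_zero] at hcut
    have hia : ι (ori e0).1 = 1 := if_pos (SimpleGraph.Reachable.refl _)
    have hib : ι (ori e0).2 = 0 := if_neg hbridge
    rw [hia, hib] at hcut
    simp only [hg] at hcut
    apply he0
    linarith
  -- Step II: the support of the flow determines the tree.
  rw [← SimpleGraph.edgeSet_inj]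
  ext s
  constructor
  · intro hs
    have hsG : s ∈ G.edgeFinset :=
      SimpleGraph.mem_edgeFinset.mpr (SimpleGraph.edgeSet_mono hTG hs)
    have hne := tree_flow_ne_zero G r x hx ori hori T hT.IsAcyclic f hfsupp hf ⟨s, hsG⟩ hs
    rw [hfe] at hne
    exact hf'supp _ hne
  · intro hs
    have hsG : s ∈ G.edgeFinset :=
      SimpleGraph.mem_edgeFinset.mpr (SimpleGraph.edgeSet_mono hT'G hs)
    have hne := tree_flow_ne_zero G r x hx ori hori T' hT'.IsAcyclic f' hf'supp hf' ⟨s, hsG⟩ hs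
    rw [← hfe] at hne
    exact hfsupp _ hne
end

section
/- Let G be a finite connected graph and M ⊆ E(G) a set of measured edges such that E(G) \ M contains a cycle (i.e., is not a spanning forest complement making M cover all cycles). Then there exist two distinct spanning trees T ≠ T' of G whose measured flow vectors coincide for every injection vector x: s(T,x) = s(T',x) for all x. -/
open SimpleGraph

section AuxGraph
variable {V : Type*}



lemma aux_acyclic_mono {H H' : SimpleGraph V} (hle : H ≤ H') (h : H'.IsAcyclic) : H.IsAcyclic := by
  intro v c hc
  exact h (c.transfer H' (fun e he => edgeSet_mono hle (c.edges_subset_edgeSet he)))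
    (hc.transfer _)

lemma aux_first_edge {K : SimpleGraph V} {a b y : V} {p : K.Walk a y} (hp : p.IsPath)
    (he : s(a, b) ∈ p.edges) :
    ∃ (hadj : K.Adj a b) (q : K.Walk b y), p = SimpleGraph.Walk.cons hadj q := by
  cases p with
  | nil => simp at he
  | @cons _ w _ h q =>
    rw [SimpleGraph.Walk.edges_cons, List.mem_cons] at he
    rcases he with he | he
    · rw [Sym2.eq_iff] at he
      rcases he with ⟨-, rfl⟩ | ⟨h1, h2⟩
      · exact ⟨h, q, rfl⟩
      · exact absurd h1 h.ne
    · exact absurd (SimpleGraph.Walk.fst_mem_support_of_mem_edges q he)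
        ((SimpleGraph.Walk.cons_isPath_iff _ _).mp hp).2


lemma aux_cycle_minus_edge [DecidableEq V] {K : SimpleGraph V} {v a b : V} {c : K.Walk v v}
    (hc : c.IsCycle) (he : s(a, b) ∈ c.edges) :
    ∃ p : K.Walk a b, p.IsPath ∧ ∀ e, e ∈ p.edges ↔ (e ∈ c.edges ∧ e ≠ s(a, b)) := by
  have hab : a ≠ b := (c.adj_of_mem_edges he).ne
  have ha : a ∈ c.support := c.fst_mem_support_of_mem_edges he
  set c' := c.rotate a ha with hc'def
  have hc' : c'.IsCycle := hc.rotate ha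
  have hmemiff : ∀ e, e ∈ c'.edges ↔ e ∈ c.edges := fun e =>
    (c.rotate_edges a ha).mem_iff
  have he' : s(a, b) ∈ c'.edges := (hmemiff _).mpr he
  clear_value c'
  cases c' with
  | nil => exact absurd hc' (SimpleGraph.Walk.IsCycle.not_of_nil)
  | @cons _ z _ h t =>
    obtain ⟨htp, hnot⟩ := (SimpleGraph.Walk.cons_isCycle_iff t h).mp hc'
    -- note: cons_isCycle_iff : (cons h p).IsCycle ↔ p.IsPath ∧ s(?,?) ∉ p.edges
    by_cases hz : z = b
    · subst hz
      refine ⟨t.reverse, htp.reverse, fun e => ?_⟩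
      rw [SimpleGraph.Walk.edges_reverse, List.mem_reverse]
      constructor
      · intro het
        refine ⟨(hmemiff e).mp ?_, fun hee => ?_⟩
        · rw [SimpleGraph.Walk.edges_cons]; exact List.mem_cons_of_mem _ het
        · rw [hee] at het; exact hnot (by simpa [Sym2.eq_swap] using het)
      · rintro ⟨hec, hee⟩
        have := (hmemiff e).mpr hec
        rw [SimpleGraph.Walk.edges_cons, List.mem_cons] at this
        rcases this with h1 | h1
        · exact absurd h1 (by simpa [Sym2.eq_swap] using hee)
        · exact h1
    · -- z ≠ b : s(a,b) is inside t
      have het : s(a, b) ∈ t.edges := by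
        rw [SimpleGraph.Walk.edges_cons, List.mem_cons] at he'
        rcases he' with h1 | h1
        · rw [Sym2.eq_iff] at h1
          rcases h1 with ⟨-, h2⟩ | ⟨h2, -⟩
          · exact absurd h2.symm hz
          · exact absurd h2 h.ne
        · exact h1
      have hetrev : s(a, b) ∈ t.reverse.edges := by
        rw [SimpleGraph.Walk.edges_reverse, List.mem_reverse]; exact het
      obtain ⟨hadj, t₂, ht₂⟩ := aux_first_edge htp.reverse hetrev
      have ht₂p : t₂.IsPath ∧ a ∉ t₂.support := by
        have := htp.reverse; rw [ht₂, SimpleGraph.Walk.cons_isPath_iff] at this; exact this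
      have hnodup : s(a, b) ∉ t₂.edges := by
        have := htp.reverse.edges_nodup
        rw [ht₂, SimpleGraph.Walk.edges_cons, List.nodup_cons] at this
        exact this.1
      have htmem : ∀ e, e ∈ t.edges ↔ (e = s(a, b) ∨ e ∈ t₂.edges) := by
        intro e
        rw [← List.mem_reverse, ← SimpleGraph.Walk.edges_reverse, ht₂,
          SimpleGraph.Walk.edges_cons, List.mem_cons]
      refine ⟨SimpleGraph.Walk.cons h t₂.reverse, ?_, fun e => ?_⟩
      · rw [SimpleGraph.Walk.cons_isPath_iff]
        refine ⟨ht₂p.1.reverse, ?_⟩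
        rw [SimpleGraph.Walk.support_reverse, List.mem_reverse]
        exact ht₂p.2
      · rw [SimpleGraph.Walk.edges_cons, List.mem_cons, SimpleGraph.Walk.edges_reverse,
          List.mem_reverse]
        constructor
        · rintro (rfl | h1)
          · refine ⟨(hmemiff _).mp ?_, fun hee => ?_⟩
            · rw [SimpleGraph.Walk.edges_cons]; exact List.mem_cons_self
            · rw [Sym2.eq_iff] at hee
              rcases hee with ⟨-, h2⟩ | ⟨h2, -⟩
              · exact hz h2
              · exact hab h2
          · refine ⟨(hmemiff _).mp ?_, fun hee => hnodup (hee ▸ h1)⟩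
            rw [SimpleGraph.Walk.edges_cons]
            exact List.mem_cons_of_mem _ ((htmem e).mpr (Or.inr h1))
        · rintro ⟨hec, hee⟩
          have := (hmemiff e).mpr hec
          rw [SimpleGraph.Walk.edges_cons, List.mem_cons] at this
          rcases this with h1 | h1
          · exact Or.inl h1
          · rcases (htmem e).mp h1 with h2 | h2
            · exact absurd h2 hee
            · exact Or.inr h2



lemma aux_path_acyclic [DecidableEq V] {K : SimpleGraph V} {a b : V} (q : K.Walk a b)
    (hq : q.IsPath) : (SimpleGraph.fromEdgeSet {e | e ∈ q.edges}).IsAcyclic := by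
  induction q with
  | nil =>
    simp only [SimpleGraph.Walk.edges_nil, List.not_mem_nil, Set.setOf_false,
      SimpleGraph.fromEdgeSet_empty]
    exact SimpleGraph.isAcyclic_bot
  | @cons u w _ h q ih =>
    obtain ⟨hqp, hus⟩ := (SimpleGraph.Walk.cons_isPath_iff h q).mp hq
    intro y cyc hcyc
    by_cases hmem : s(u, w) ∈ cyc.edges
    · -- the cycle uses the pendant edge s(u,w); remove it to get a path u→w in F
      obtain ⟨p, hp, hpe⟩ := aux_cycle_minus_edge hcyc hmem
      -- the first edge of p is an F-edge at u different from s(u,w): impossible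
      cases p with
      | nil => exact h.ne rfl
      | @cons _ z _ hadj p₂ =>
        have h1 : s(u, z) ∈ (SimpleGraph.Walk.cons hadj p₂).edges := by
          rw [SimpleGraph.Walk.edges_cons]; exact List.mem_cons_self
        obtain ⟨hin, hne⟩ := (hpe _).mp h1
        have : s(u, z) ∈ {e : Sym2 V | e ∈ (SimpleGraph.Walk.cons h q).edges} :=
          ((SimpleGraph.fromEdgeSet_adj _).mp hadj).1
        rw [Set.mem_setOf_eq, SimpleGraph.Walk.edges_cons, List.mem_cons] at this
        rcases this with h2 | h2
        · exact hne h2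
        · exact hus (SimpleGraph.Walk.fst_mem_support_of_mem_edges q h2)
    · -- the cycle avoids s(u,w): transfer it to the smaller graph
      refine ih hqp (cyc.transfer _ (fun e he => ?_)) (hcyc.transfer _)
      have hF := cyc.edges_subset_edgeSet he
      rw [SimpleGraph.edgeSet_fromEdgeSet, Set.mem_diff, Set.mem_setOf_eq,
        SimpleGraph.Walk.edges_cons, List.mem_cons] at hF
      rcases hF with ⟨h1 | h1, h2⟩
      · exact absurd h1 (fun hh => hmem (hh ▸ he))
      · rw [SimpleGraph.edgeSet_fromEdgeSet, Set.mem_diff]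
        exact ⟨h1, h2⟩

end AuxGraph

lemma aux_div_free_eq_zero {V : Type*} [Fintype V] [DecidableEq V]
    (G : SimpleGraph V) [DecidableRel G.Adj]
    (ori : {e : Sym2 V // e ∈ G.edgeFinset} → V × V)
    (hori : ∀ e, Sym2.mk (ori e).1 (ori e).2 = e.1)
    (T : SimpleGraph V) (hT : T.IsAcyclic)
    (h : {e : Sym2 V // e ∈ G.edgeFinset} → ℝ)
    (hsupp : ∀ e, h e ≠ 0 → e.1 ∈ T.edgeSet)
    (hdiv : ∀ v : V, ∑ e, (if v = (ori e).1 then (1:ℝ) else if v = (ori e).2 then -1 else 0) * h e = 0) :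
    ∀ e, h e = 0 := by
  by_contra hcon
  push_neg at hcon
  obtain ⟨e₀, he₀⟩ := hcon
  set F : SimpleGraph V :=
    SimpleGraph.fromEdgeSet {s | ∃ e, h e ≠ 0 ∧ e.1 = s} with hFdef
  have hFadj : ∀ {u w : V}, F.Adj u w ↔ (∃ e, h e ≠ 0 ∧ e.1 = s(u, w)) ∧ u ≠ w := by
    intro u w; rw [hFdef, SimpleGraph.fromEdgeSet_adj]; rfl
  have hFT : F ≤ T := by
    intro u w hA
    obtain ⟨⟨e, hne, hes⟩, -⟩ := hFadj.mp hA
    exact (SimpleGraph.mem_edgeSet T).mp (hes ▸ hsupp e hne)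
  have hFac : F.IsAcyclic := aux_acyclic_mono hFT hT
  have hdiag : ∀ e : {e : Sym2 V // e ∈ G.edgeFinset}, ¬ e.1.IsDiag := fun e =>
    G.not_isDiag_of_mem_edgeSet (SimpleGraph.mem_edgeFinset.mp e.2)
  have horine : ∀ e : {e : Sym2 V // e ∈ G.edgeFinset}, (ori e).1 ≠ (ori e).2 := by
    intro e hne
    exact hdiag e (by rw [← hori e]; exact hne)
  have hmemori : ∀ (e : {e : Sym2 V // e ∈ G.edgeFinset}) (u : V),
      u ∈ e.1 ↔ (u = (ori e).1 ∨ u = (ori e).2) := by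
    intro e u
    conv_lhs => rw [← hori e]
    exact Sym2.mem_iff
  -- the set of lengths of paths in F
  set L : Set ℕ := {n | ∃ (u w : V) (p : F.Walk u w), p.IsPath ∧ p.length = n} with hLdef
  have hbdd : BddAbove L := by
    refine ⟨Fintype.card V, fun n hn => ?_⟩
    obtain ⟨u, w, p, hp, rfl⟩ := hn
    exact le_of_lt hp.length_lt
  have hadje : F.Adj (ori e₀).1 (ori e₀).2 := by
    refine hFadj.mpr ⟨⟨e₀, he₀, (hori e₀).symm⟩, horine e₀⟩
  have hLne : (1 : ℕ) ∈ L := by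
    refine ⟨_, _, SimpleGraph.Walk.cons hadje SimpleGraph.Walk.nil, ?_, rfl⟩
    rw [SimpleGraph.Walk.cons_isPath_iff]
    refine ⟨SimpleGraph.Walk.IsPath.nil, ?_⟩
    simp [horine e₀]
  -- a path of maximal length
  have hmem := Nat.sSup_mem ⟨1, hLne⟩ hbdd
  obtain ⟨u, w, p, hp, hplen⟩ := hmem
  have hp1 : 1 ≤ p.length := hplen ▸ le_csSup hbdd hLne
  cases p with
  | nil => simp at hp1
  | @cons _ z _ hadj q =>
    -- all F-neighbors of u equal z
    have hnbr : ∀ y, F.Adj u y → y = z := by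
      intro y hy
      by_contra hyz
      by_cases hys : y ∈ (SimpleGraph.Walk.cons hadj q).support
      · -- would create a cycle
        set p' := (SimpleGraph.Walk.cons hadj q).takeUntil y hys with hp'def
        have hp'path : p'.IsPath := hp.takeUntil hys
        have : ¬ s(y, u) ∈ p'.edges := by
          intro hmem'
          have hsub := (SimpleGraph.Walk.edges_takeUntil_subset _ hys) hmem'
          rw [SimpleGraph.Walk.edges_cons, List.mem_cons] at hsub
          rcases hsub with h1 | h1
          · rw [Sym2.eq_iff] at h1
            rcases h1 with ⟨h2, h3⟩ | ⟨h2, h3⟩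
            · exact hy.ne' h2
            · exact hyz h2
          · exact ((SimpleGraph.Walk.cons_isPath_iff _ _).mp hp).2
              (SimpleGraph.Walk.snd_mem_support_of_mem_edges q h1)
        exact hFac _ ((SimpleGraph.Walk.cons_isCycle_iff p' hy.symm).mpr ⟨hp'path, this⟩)
      · -- would extend the maximal path
        have hlong : (SimpleGraph.Walk.cons hy.symm (SimpleGraph.Walk.cons hadj q)).IsPath := by
          rw [SimpleGraph.Walk.cons_isPath_iff]
          exact ⟨hp, hys⟩
        have : (SimpleGraph.Walk.cons hadj q).length + 1 ∈ L :=
          ⟨_, _, _, hlong, by simp [SimpleGraph.Walk.length_cons]⟩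
        have := le_csSup hbdd this
        omega
    -- the unique F-edge at u
    obtain ⟨⟨e₁, h₁, he₁⟩, hune⟩ := hFadj.mp hadj
    have hsum := hdiv u
    have hsingle : ∑ e, (if u = (ori e).1 then (1:ℝ) else if u = (ori e).2 then -1 else 0) * h e
        = (if u = (ori e₁).1 then (1:ℝ) else if u = (ori e₁).2 then -1 else 0) * h e₁ := by
      refine Finset.sum_eq_single e₁ (fun e _ hne => ?_) (fun he => absurd (Finset.mem_univ e₁) he)
      by_cases hhe : h e = 0
      · rw [hhe, mul_zero]
      · -- show u ∉ e.1
        have hbz : ¬ (u = (ori e).1 ∨ u = (ori e).2) := by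
          intro hu
          have humem : u ∈ e.1 := (hmemori e u).mpr hu
          obtain ⟨y, hey⟩ := Sym2.mem_iff_exists.mp humem
          have hyne : u ≠ y := by
            intro hh
            exact hdiag e (by rw [hey, hh]; exact Sym2.mk_isDiag_iff.mpr rfl)
          have : F.Adj u y := hFadj.mpr ⟨⟨e, hhe, hey⟩, hyne⟩
          have hyz := hnbr y this
          apply hne
          apply Subtype.ext
          rw [hey, he₁, hyz]
        rw [if_neg (fun hh => hbz (Or.inl hh)), if_neg (fun hh => hbz (Or.inr hh)), zero_mul]
    rw [hsingle] at hsum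
    have humem : u ∈ e₁.1 := by rw [he₁]; exact Sym2.mem_mk_left u z
    rcases (hmemori e₁ u).mp humem with h2 | h2
    · rw [if_pos h2, one_mul] at hsum
      exact h₁ hsum
    · rw [if_neg, if_pos h2, neg_one_mul, neg_eq_zero] at hsum
      · exact h₁ hsum
      · rw [h2]; exact (horine e₁).symm


lemma aux_sum_list_swap {E : Type*} [Fintype E] {D : Type*} (l : List D)
    (B : E → ℝ) (g : D → E → ℝ) :
    ∑ e, B e * (l.map (fun d => g d e)).sum = (l.map (fun d => ∑ e, B e * g d e)).sum := by
  induction l with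
  | nil => simp
  | cons d t ih =>
    simp only [List.map_cons, List.sum_cons, mul_add, Finset.sum_add_distrib, ih]

lemma aux_dart_telescope {V : Type*} [DecidableEq V] {G : SimpleGraph V} (v : V) {a b : V}
    (p : G.Walk a b) :
    ((p.darts).map (fun d => (if v = d.toProd.1 then (1:ℝ) else 0)
        - (if v = d.toProd.2 then 1 else 0))).sum
      = (if v = a then 1 else 0) - (if v = b then 1 else 0) := by
  induction p with
  | nil => simp
  | cons h q ih =>
    simp only [SimpleGraph.Walk.darts_cons, List.map_cons, List.sum_cons, ih]
    ring

section AuxFlow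

variable {V : Type*} [Fintype V] [DecidableEq V]
  (G : SimpleGraph V) [DecidableRel G.Adj]
  (ori : {e : Sym2 V // e ∈ G.edgeFinset} → V × V)

noncomputable def auxSigma (d : G.Dart) (e : {e : Sym2 V // e ∈ G.edgeFinset}) : ℝ :=
  if ori e = d.toProd then 1 else if ori e = d.toProd.swap then -1 else 0

noncomputable def auxFlow {a b : V} (p : G.Walk a b) (e : {e : Sym2 V // e ∈ G.edgeFinset}) : ℝ :=
  (p.darts.map (fun d => auxSigma G ori d e)).sum

variable (hori : ∀ e, Sym2.mk (ori e).1 (ori e).2 = e.1)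
include hori

lemma auxSigma_eq_zero {d : G.Dart} {e : {e : Sym2 V // e ∈ G.edgeFinset}}
    (h : d.edge ≠ e.1) : auxSigma G ori d e = 0 := by
  unfold auxSigma
  rw [if_neg, if_neg]
  · intro hh
    exact h (by rw [← hori e, hh, SimpleGraph.Dart.edge, Sym2.mk_prod_swap_eq]; rfl)
  · intro hh
    exact h (by rw [← hori e, hh]; rfl)

lemma auxSigma_of_edge_eq {d : G.Dart} {e : {e : Sym2 V // e ∈ G.edgeFinset}}
    (h : d.edge = e.1) : auxSigma G ori d e = 1 ∨ auxSigma G ori d e = -1 := by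
  have : s((ori e).1, (ori e).2) = s(d.toProd.1, d.toProd.2) := by rw [hori e, ← h]; rfl
  rcases Sym2.mk_eq_mk_iff.mp this with h1 | h1
  · left; unfold auxSigma; rw [if_pos h1]
  · right; unfold auxSigma
    rw [if_neg, if_pos h1]
    intro h2
    rw [h2] at h1
    have := congrArg Prod.fst h1
    exact d.adj.ne (by simpa using this.symm)

lemma auxFlow_support {a b : V} (p : G.Walk a b) (e : {e : Sym2 V // e ∈ G.edgeFinset})
    (h : auxFlow G ori p e ≠ 0) : e.1 ∈ p.edges := by
  by_contra hmem
  apply h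
  unfold auxFlow
  apply List.sum_eq_zero
  intro x hx
  obtain ⟨d, hd, rfl⟩ := List.mem_map.mp hx
  refine auxSigma_eq_zero G ori hori (fun hh => hmem ?_)
  rw [← hh]
  exact List.mem_map_of_mem hd

lemma auxFlow_ne_zero {a b : V} (p : G.Walk a b) (ht : p.IsTrail)
    (e : {e : Sym2 V // e ∈ G.edgeFinset}) (he : e.1 ∈ p.edges) : auxFlow G ori p e ≠ 0 := by
  induction p with
  | nil => simp at he
  | @cons u w _ h q ih =>
    have hnodup := ht.edges_nodup
    rw [SimpleGraph.Walk.edges_cons, List.nodup_cons] at hnodup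
    have hqt : q.IsTrail := by
      rw [SimpleGraph.Walk.isTrail_cons] at ht; exact ht.1
    rw [SimpleGraph.Walk.edges_cons, List.mem_cons] at he
    have hflow : auxFlow G ori (SimpleGraph.Walk.cons h q) e
        = auxSigma G ori (SimpleGraph.Dart.mk (u, w) h) e + auxFlow G ori q e := by
      unfold auxFlow
      rw [SimpleGraph.Walk.darts_cons, List.map_cons, List.sum_cons]
    rcases he with he | he
    · have hq0 : auxFlow G ori q e = 0 := by
        by_contra h0
        exact hnodup.1 (he ▸ auxFlow_support G ori hori q e h0)
      have hd : (SimpleGraph.Dart.mk (u, w) h).edge = e.1 := he.symm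
      rcases auxSigma_of_edge_eq G ori hori hd with h1 | h1 <;>
        rw [hflow, hq0, add_zero, h1] <;> norm_num
    · have hne : (SimpleGraph.Dart.mk (u, w) h).edge ≠ e.1 := by
        intro hh
        apply hnodup.1
        rw [show s(u,w) = e.1 from hh]
        exact he
      rw [hflow, auxSigma_eq_zero G ori hori hne, zero_add]
      exact ih hqt he


lemma auxB_sigma (v : V) (d : G.Dart) :
    ∑ e, (if v = (ori e).1 then (1:ℝ) else if v = (ori e).2 then -1 else 0) * auxSigma G ori d e
      = (if v = d.toProd.1 then (1:ℝ) else 0) - (if v = d.toProd.2 then 1 else 0) := by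
  have hde : d.edge ∈ G.edgeFinset := SimpleGraph.mem_edgeFinset.mpr d.edge_mem
  rw [Finset.sum_eq_single (⟨d.edge, hde⟩ : {e : Sym2 V // e ∈ G.edgeFinset})]
  · have hne : d.toProd.1 ≠ d.toProd.2 := d.adj.ne
    have heq : s((ori ⟨d.edge, hde⟩).1, (ori ⟨d.edge, hde⟩).2) = s(d.toProd.1, d.toProd.2) := by
      rw [hori]; rfl
    rcases Sym2.mk_eq_mk_iff.mp heq with h1 | h1
    · rw [show auxSigma G ori d ⟨d.edge, hde⟩ = 1 from by unfold auxSigma; rw [if_pos h1],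
        h1, mul_one]
      by_cases h2 : v = d.toProd.1
      · rw [if_pos h2, if_pos h2, if_neg (h2 ▸ hne), sub_zero]
      · rw [if_neg h2, if_neg h2, zero_sub]
        by_cases h3 : v = d.toProd.2
        · rw [if_pos h3, if_pos h3]
        · rw [if_neg h3, if_neg h3, neg_zero]
    · have hsig : auxSigma G ori d ⟨d.edge, hde⟩ = -1 := by
        unfold auxSigma
        rw [if_neg, if_pos h1]
        intro h2
        rw [h2] at h1
        have := congrArg Prod.fst h1
        exact d.adj.ne (by simpa using this.symm)
      rw [hsig, h1, mul_neg_one]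
      simp only [Prod.fst_swap, Prod.snd_swap]
      by_cases h2 : v = d.toProd.1 <;> by_cases h3 : v = d.toProd.2
      · exact absurd (h2.symm.trans h3) hne
      · simp [h2, h3]
      · simp [h2, h3]
      · simp [h2, h3]
  · intro e _ hne
    rw [auxSigma_eq_zero G ori hori (fun hh => hne (Subtype.ext hh.symm)), mul_zero]
  · intro he; exact absurd (Finset.mem_univ _) he


lemma auxFlow_div {v₀ : V} (c : G.Walk v₀ v₀) (v : V) :
    ∑ e, (if v = (ori e).1 then (1:ℝ) else if v = (ori e).2 then -1 else 0) * auxFlow G ori c e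
      = 0 := by
  unfold auxFlow
  rw [aux_sum_list_swap]
  rw [show (fun d : G.Dart => ∑ e,
      (if v = (ori e).1 then (1:ℝ) else if v = (ori e).2 then -1 else 0) * auxSigma G ori d e)
      = fun d => (if v = d.toProd.1 then (1:ℝ) else 0) - (if v = d.toProd.2 then 1 else 0)
    from funext (auxB_sigma G ori hori v)]
  rw [aux_dart_telescope, sub_self]

end AuxFlow
/-- Necessity: if the unmeasured part `E(G) \ M` of a finite connected graph `G` contains a
cycle (so some cycle of `G` carries no sensor), then there are two distinct spanning trees
`T ≠ T'` whose routed flows coincide on every measured edge for every injection vector `x`.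
Flows are defined by conservation: `f` is supported on the tree edges and `B f = y` with
`y r = ∑_{v ≠ r} x v` and `y v = -x v` otherwise, for the signed incidence matrix `B` of an
arbitrary orientation. -/
theorem stmt_19 {V : Type*} [Fintype V] [DecidableEq V]
    (G : SimpleGraph V) [DecidableRel G.Adj] (hG : G.Connected) (r : V)
    (ori : {e : Sym2 V // e ∈ G.edgeFinset} → V × V)
    (hori : ∀ e, Sym2.mk (ori e).1 (ori e).2 = e.1)
    (M : Finset (Sym2 V)) (hMG : M ⊆ G.edgeFinset)
    (hM : ¬ (G.deleteEdges (M : Set (Sym2 V))).IsAcyclic) :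
    ∃ T T' : SimpleGraph V, T ≤ G ∧ T.IsTree ∧ T' ≤ G ∧ T'.IsTree ∧ T ≠ T' ∧
      ∀ x : V → ℝ, ∀ f f' : {e : Sym2 V // e ∈ G.edgeFinset} → ℝ,
        (∀ e, f e ≠ 0 → e.1 ∈ T.edgeSet) →
        (∀ e, f' e ≠ 0 → e.1 ∈ T'.edgeSet) →
        ((Matrix.of fun (v : V) (e : {e : Sym2 V // e ∈ G.edgeFinset}) =>
            if v = (ori e).1 then (1 : ℝ) else if v = (ori e).2 then -1 else 0).mulVec f
          = fun v => if v = r then ∑ u ∈ Finset.univ.erase r, x u else -x v) →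
        ((Matrix.of fun (v : V) (e : {e : Sym2 V // e ∈ G.edgeFinset}) =>
            if v = (ori e).1 then (1 : ℝ) else if v = (ori e).2 then -1 else 0).mulVec f'
          = fun v => if v = r then ∑ u ∈ Finset.univ.erase r, x u else -x v) →
        ∀ e : {e : Sym2 V // e ∈ G.edgeFinset}, e.1 ∈ M → f e = f' e := by
  classical
  -- extract an M-free cycle in G
  obtain ⟨v₀, c, hc, hcM⟩ : ∃ (v₀ : V) (c : G.Walk v₀ v₀), c.IsCycle ∧ ∀ e ∈ c.edges, e ∉ M := by
    unfold SimpleGraph.IsAcyclic at hM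
    push_neg at hM
    obtain ⟨v₀, c₀, hc₀⟩ := hM
    have hsub : ∀ e ∈ c₀.edges, e ∈ G.edgeSet := by
      intro e he
      have := c₀.edges_subset_edgeSet he
      rw [SimpleGraph.edgeSet_deleteEdges] at this
      exact this.1
    refine ⟨v₀, c₀.transfer G hsub, hc₀.transfer _, ?_⟩
    intro e he
    rw [c₀.edges_transfer hsub] at he
    have := c₀.edges_subset_edgeSet he
    rw [SimpleGraph.edgeSet_deleteEdges] at this
    exact fun hm => this.2 hm
  cases c with
  | nil => exact absurd hc SimpleGraph.Walk.IsCycle.not_of_nil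
  | @cons _ z _ hadj Q =>
    obtain ⟨hQpath, hε₀Q⟩ := (SimpleGraph.Walk.cons_isCycle_iff Q hadj).mp hc
    -- Q is nontrivial: get the second edge ε₁
    cases Q with
    | nil => have := hc.three_le_length; simp at this
    | @cons _ z₂ _ hadj₂ q₂ =>
      set Q : G.Walk z v₀ := SimpleGraph.Walk.cons hadj₂ q₂ with hQdef
      have hε₁Q : s(z, z₂) ∈ Q.edges := by
        rw [hQdef, SimpleGraph.Walk.edges_cons]; exact List.mem_cons_self
      have hε₁ne : s(z, z₂) ≠ s(v₀, z) := fun h => hε₀Q (h ▸ hε₁Q)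
      have hQG : ∀ e ∈ Q.edges, e ∈ G.edgeSet := fun e he => Q.edges_subset_edgeSet he
      -- the path graph
      set P : SimpleGraph V := SimpleGraph.fromEdgeSet {e | e ∈ Q.edges} with hPdef
      have hPac : P.IsAcyclic := aux_path_acyclic Q hQpath
      have hPG : P ≤ G := by
        intro a' b' hab
        obtain ⟨hm, -⟩ := (SimpleGraph.fromEdgeSet_adj _).mp hab
        exact (SimpleGraph.mem_edgeSet G).mp (hQG _ hm)
      -- maximal acyclic subgraph containing P
      obtain ⟨T, hTS, hTmax⟩ := Set.Finite.exists_maximalFor id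
        {H : SimpleGraph V | P ≤ H ∧ H ≤ G ∧ H.IsAcyclic} (Set.toFinite _)
        ⟨P, le_refl P, hPG, hPac⟩
      obtain ⟨hPT, hTG, hTac⟩ := hTS
      simp only [id] at hTmax
      have hqT : ∀ e ∈ Q.edges, e ∈ T.edgeSet := by
        intro e he
        refine SimpleGraph.edgeSet_mono hPT ?_
        rw [hPdef, SimpleGraph.edgeSet_fromEdgeSet]
        exact ⟨he, fun hd => G.not_isDiag_of_mem_edgeSet (hQG e he) hd⟩
      -- T is connected
      have hreach_adj : ∀ a' b', G.Adj a' b' → T.Reachable a' b' := by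
        intro a' b' hab
        by_cases hT : T.Adj a' b'
        · exact hT.reachable
        · have hT₂G : T ⊔ SimpleGraph.fromEdgeSet {s(a', b')} ≤ G := by
            refine sup_le hTG ?_
            intro x y hxy
            obtain ⟨hm, hne⟩ := (SimpleGraph.fromEdgeSet_adj _).mp hxy
            rw [Set.mem_singleton_iff] at hm
            exact (SimpleGraph.mem_edgeSet G).mp (hm ▸ (SimpleGraph.mem_edgeSet G).mpr hab)
          have hT₂ac : ¬ (T ⊔ SimpleGraph.fromEdgeSet {s(a', b')}).IsAcyclic := by
            intro hac
            have hTT₂ : T ≤ T ⊔ SimpleGraph.fromEdgeSet {s(a', b')} := le_sup_left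
            have heq := le_antisymm hTT₂ (hTmax ⟨hPT.trans hTT₂, hT₂G, hac⟩ hTT₂)
            apply hT
            rw [heq, SimpleGraph.sup_adj]
            exact Or.inr ((SimpleGraph.fromEdgeSet_adj _).mpr ⟨rfl, hab.ne⟩)
          unfold SimpleGraph.IsAcyclic at hT₂ac
          push_neg at hT₂ac
          obtain ⟨y, cyc, hcyc⟩ := hT₂ac
          have hedge : ∀ e ∈ cyc.edges, e ≠ s(a', b') → e ∈ T.edgeSet := by
            intro e he hne
            have := cyc.edges_subset_edgeSet he
            rw [SimpleGraph.edgeSet_sup, Set.mem_union, SimpleGraph.edgeSet_fromEdgeSet] at this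
            rcases this with h1 | ⟨h1, -⟩
            · exact h1
            · exact absurd (Set.mem_singleton_iff.mp h1) hne
          by_cases hmem : s(a', b') ∈ cyc.edges
          · obtain ⟨p, hpp, hpe⟩ := aux_cycle_minus_edge hcyc hmem
            refine ⟨p.transfer T (fun e he => ?_)⟩
            obtain ⟨hec, hene⟩ := (hpe e).mp he
            exact hedge e hec hene
          · exact absurd ((hcyc.transfer (fun e he => hedge e he (fun hh => hmem (hh ▸ he)))))
              (hTac _)
      have hreach : ∀ a' b', T.Reachable a' b' := by
        intro a' b'
        obtain ⟨W⟩ := hG.preconnected a' b'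
        induction W with
        | nil => exact SimpleGraph.Reachable.refl _
        | cons h p ih => exact (hreach_adj _ _ h).trans ih
      haveI : Nonempty V := hG.nonempty
      have hTconn : T.Connected := SimpleGraph.Connected.mk (fun a' b' => hreach a' b')
      have hTtree : T.IsTree := ⟨hTconn, hTac⟩
      -- s(v₀,z) is not an edge of T
      have hε₀T : s(v₀, z) ∉ T.edgeSet := by
        intro hin
        have hsub : ∀ e ∈ (SimpleGraph.Walk.cons hadj Q).edges, e ∈ T.edgeSet := by
          intro e he
          rw [SimpleGraph.Walk.edges_cons, List.mem_cons] at he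
          rcases he with rfl | he
          · exact hin
          · exact hqT e he
        exact hTac _ (hc.transfer hsub)
      -- the exchanged tree T'
      set T' : SimpleGraph V :=
        T.deleteEdges {s(z, z₂)} ⊔ SimpleGraph.fromEdgeSet {s(v₀, z)} with hT'def
      have hT'mem : ∀ e, e ∈ T'.edgeSet ↔ ((e ∈ T.edgeSet ∧ e ≠ s(z, z₂)) ∨ e = s(v₀, z)) := by
        intro e
        rw [hT'def, SimpleGraph.edgeSet_sup, Set.mem_union, SimpleGraph.edgeSet_deleteEdges,
          SimpleGraph.edgeSet_fromEdgeSet, Set.mem_diff, Set.mem_diff]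
        constructor
        · rintro (⟨h1, h2⟩ | ⟨h1, -⟩)
          · exact Or.inl ⟨h1, fun hh => h2 (Set.mem_singleton_iff.mpr hh)⟩
          · exact Or.inr (Set.mem_singleton_iff.mp h1)
        · rintro (⟨h1, h2⟩ | rfl)
          · exact Or.inl ⟨h1, fun hh => h2 (Set.mem_singleton_iff.mp hh)⟩
          · exact Or.inr ⟨rfl, fun hd => hadj.ne (Sym2.mk_isDiag_iff.mp hd)⟩
      have hT'G : T' ≤ G := by
        rw [hT'def]
        refine sup_le ((SimpleGraph.deleteEdges_le _).trans hTG) ?_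
        intro x y hxy
        obtain ⟨hm, -⟩ := (SimpleGraph.fromEdgeSet_adj _).mp hxy
        rw [Set.mem_singleton_iff] at hm
        exact (SimpleGraph.mem_edgeSet G).mp (hm ▸ (SimpleGraph.mem_edgeSet G).mpr hadj)
      -- the cycle as a walk in T ⊔ {ε₀}
      have hccK : ∀ e ∈ (SimpleGraph.Walk.cons hadj Q).edges,
          e ∈ (T ⊔ SimpleGraph.fromEdgeSet {s(v₀, z)}).edgeSet := by
        intro e he
        rw [SimpleGraph.edgeSet_sup, Set.mem_union]
        rw [SimpleGraph.Walk.edges_cons, List.mem_cons] at he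
        rcases he with rfl | he
        · right
          rw [SimpleGraph.edgeSet_fromEdgeSet]
          exact ⟨rfl, fun hd => hadj.ne (Sym2.mk_isDiag_iff.mp hd)⟩
        · exact Or.inl (hqT e he)
      have hcK : ((SimpleGraph.Walk.cons hadj Q).transfer _ hccK).IsCycle := hc.transfer hccK
      have hcKedges : ((SimpleGraph.Walk.cons hadj Q).transfer _ hccK).edges
          = s(v₀, z) :: Q.edges := by
        rw [SimpleGraph.Walk.edges_transfer, SimpleGraph.Walk.edges_cons]
      -- path W₂ : v₀ → z in T through ε₁
      obtain ⟨p₂, hp₂, hp₂e⟩ := aux_cycle_minus_edge hcK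
        (by rw [hcKedges]; exact List.mem_cons_self)
      have hp₂T : ∀ e ∈ p₂.edges, e ∈ T.edgeSet := by
        intro e he
        obtain ⟨hec, hene⟩ := (hp₂e e).mp he
        rw [hcKedges, List.mem_cons] at hec
        rcases hec with rfl | hec
        · exact absurd rfl hene
        · exact hqT e hec
      have hε₁p₂ : s(z, z₂) ∈ p₂.edges := (hp₂e _).mpr
        ⟨by rw [hcKedges]; exact List.mem_cons_of_mem _ hε₁Q, hε₁ne⟩
      -- path W₃ : z → z₂ inside T'
      obtain ⟨p₃, hp₃, hp₃e⟩ := aux_cycle_minus_edge hcK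
        (by rw [hcKedges]; exact List.mem_cons_of_mem _ hε₁Q)
      have hp₃T' : ∀ e ∈ p₃.edges, e ∈ T'.edgeSet := by
        intro e he
        obtain ⟨hec, hene⟩ := (hp₃e e).mp he
        rw [hcKedges, List.mem_cons] at hec
        refine (hT'mem e).mpr ?_
        rcases hec with rfl | hec
        · exact Or.inr rfl
        · exact Or.inl ⟨hqT e hec, hene⟩
      have hreach₃ : T'.Reachable z z₂ := ⟨p₃.transfer T' hp₃T'⟩
      -- T' is acyclic
      have hT'ac : T'.IsAcyclic := by
        intro y cyc hcyc
        by_cases hmem : s(v₀, z) ∈ cyc.edges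
        · obtain ⟨p₁, hp₁, hp₁e⟩ := aux_cycle_minus_edge hcyc hmem
          have hp₁T : ∀ e ∈ p₁.edges, e ∈ T.edgeSet ∧ e ≠ s(z, z₂) := by
            intro e he
            obtain ⟨hec, hene⟩ := (hp₁e e).mp he
            rcases (hT'mem e).mp (cyc.edges_subset_edgeSet hec) with h1 | h1
            · exact h1
            · exact absurd h1 hene
          have hpaths := hTac.path_unique
            ⟨p₁.transfer T (fun e he => (hp₁T e he).1), hp₁.transfer _⟩
            ⟨p₂.transfer T hp₂T, hp₂.transfer _⟩
          have hval : p₁.transfer T (fun e he => (hp₁T e he).1) = p₂.transfer T hp₂T :=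
            congrArg Subtype.val hpaths
          have h₂ : s(z, z₂) ∈ (p₂.transfer T hp₂T).edges := by
            rw [SimpleGraph.Walk.edges_transfer]; exact hε₁p₂
          rw [← hval, SimpleGraph.Walk.edges_transfer] at h₂
          exact (hp₁T _ h₂).2 rfl
        · refine hTac _ (hcyc.transfer (fun e he => ?_))
          rcases (hT'mem e).mp (cyc.edges_subset_edgeSet he) with h1 | h1
          · exact h1.1
          · exact absurd (h1 ▸ he) hmem
      -- T' is connected
      have hT'reach : ∀ a' b', T'.Reachable a' b' := by
        intro a' b'
        obtain ⟨W⟩ := hreach a' b'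
        induction W with
        | nil => exact SimpleGraph.Reachable.refl _
        | @cons x y' _ h p ih =>
          refine SimpleGraph.Reachable.trans ?_ ih
          by_cases hxy : s(x, y') = s(z, z₂)
          · rw [Sym2.eq_iff] at hxy
            rcases hxy with ⟨rfl, rfl⟩ | ⟨rfl, rfl⟩
            · exact hreach₃
            · exact hreach₃.symm
          · refine SimpleGraph.Adj.reachable ?_
            rw [hT'def, SimpleGraph.sup_adj]
            left
            rw [SimpleGraph.deleteEdges_adj]
            exact ⟨h, fun hh => hxy (Set.mem_singleton_iff.mp hh)⟩
      have hT'tree : T'.IsTree := ⟨SimpleGraph.Connected.mk (fun a' b' => hT'reach a' b'), hT'ac⟩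
      have hTne : T ≠ T' := by
        intro heq
        apply hε₀T
        rw [heq]
        exact (hT'mem _).mpr (Or.inr rfl)
      -- the flow argument
      refine ⟨T, T', hTG, hTtree, hT'G, hT'tree, hTne, ?_⟩
      intro x f f' hf hf' hBf hBf'
      set w : {e : Sym2 V // e ∈ G.edgeFinset} → ℝ :=
        auxFlow G ori (SimpleGraph.Walk.cons hadj Q) with hwdef
      set eE : {e : Sym2 V // e ∈ G.edgeFinset} :=
        ⟨s(v₀, z), SimpleGraph.mem_edgeFinset.mpr ((SimpleGraph.mem_edgeSet G).mpr hadj)⟩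
        with heEdef
      have hweE : w eE ≠ 0 := by
        rw [hwdef]
        refine auxFlow_ne_zero G ori hori _ hc.isTrail eE ?_
        rw [SimpleGraph.Walk.edges_cons]
        exact List.mem_cons_self
      have hdivg : ∀ v, ∑ e, (if v = (ori e).1 then (1:ℝ) else if v = (ori e).2 then -1 else 0)
          * (f e - f' e) = 0 := by
        intro v
        have h1 := congrFun hBf v
        have h2 := congrFun hBf' v
        simp only [Matrix.mulVec, Matrix.of_apply, dotProduct] at h1 h2
        simp only [mul_sub, Finset.sum_sub_distrib]
        rw [h1, h2, sub_self]
      set α : ℝ := (f eE - f' eE) / w eE with hαdef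
      set h : {e : Sym2 V // e ∈ G.edgeFinset} → ℝ :=
        fun e => (f e - f' e) - α * w e with hhdef
      have hdivh : ∀ v, ∑ e, (if v = (ori e).1 then (1:ℝ) else if v = (ori e).2 then -1 else 0)
          * h e = 0 := by
        intro v
        have hw0 : ∑ e, (if v = (ori e).1 then (1:ℝ) else if v = (ori e).2 then -1 else 0)
            * w e = 0 := by
          rw [hwdef]
          exact auxFlow_div G ori hori _ v
        have hα0 : ∑ e, (if v = (ori e).1 then (1:ℝ) else if v = (ori e).2 then -1 else 0)
            * (α * w e) = 0 := by
          simp only [show ∀ e : {e : Sym2 V // e ∈ G.edgeFinset},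
            (if v = (ori e).1 then (1:ℝ) else if v = (ori e).2 then -1 else 0) * (α * w e)
            = α * ((if v = (ori e).1 then (1:ℝ) else if v = (ori e).2 then -1 else 0) * w e)
            from fun e => by ring]
          rw [← Finset.mul_sum, hw0, mul_zero]
        have hg := hdivg v
        simp only [mul_sub, Finset.sum_sub_distrib] at hg
        rw [hhdef]
        simp only [mul_sub, Finset.sum_sub_distrib, hα0, sub_zero]
        exact hg
      have heE0 : h eE = 0 := by
        rw [hhdef, hαdef]
        simp only []
        rw [div_mul_cancel₀ _ hweE, sub_self]
      have hsupph : ∀ e, h e ≠ 0 → e.1 ∈ T.edgeSet := by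
        intro e hne
        have heE1 : e.1 ≠ s(v₀, z) := by
          intro hh
          exact hne (by rw [show e = eE from Subtype.ext hh]; exact heE0)
        by_cases hw : w e = 0
        · have hg : f e - f' e ≠ 0 := by
            intro hg0
            exact hne (by rw [hhdef]; simp [hg0, hw])
          have : f e ≠ 0 ∨ f' e ≠ 0 := by
            by_contra hcc
            push_neg at hcc
            rw [hcc.1, hcc.2, sub_self] at hg
            exact hg rfl
          rcases this with h1 | h1
          · exact hf e h1
          · rcases (hT'mem e.1).mp (hf' e h1) with h2 | h2
            · exact h2.1
            · exact absurd h2 heE1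
        · have := auxFlow_support G ori hori _ e hw
          rw [SimpleGraph.Walk.edges_cons, List.mem_cons] at this
          rcases this with hh | hh
          · exact absurd hh heE1
          · exact hqT _ hh
      have hzero := aux_div_free_eq_zero G ori hori T hTac h hsupph hdivh
      intro e heM
      have hwe : w e = 0 := by
        by_contra hw
        have := auxFlow_support G ori hori _ e hw
        exact hcM e.1 this heM
      have := hzero e
      rw [hhdef] at this
      simp only [hwe, mul_zero, sub_zero] at this
      exact sub_eq_zero.mp this
end
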